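/- Let A ∈ ℂ^{m×n}, let r ≥ 1, let Λ ∈ ℂ^{n×r} satisfy Λ†Λ = I_r, let V̂ ∈ ℂ^{n×r}, and suppose ‖V̂ − Λ‖_F ≤ ε for some ε ∈ [0,1]. Then ‖A − AΛΛ†‖_F ≤ ‖A − AV̂V̂†‖_F + 3ε‖A‖_F. -/

import Mathlib

open Finset Matrix


attribute [local instance] Matrix.frobeniusSeminormedAddCommGroup

section Aux
variable {m n r k : ℕ}

lemma fnorm_eq (M : Matrix (Fin m) (Fin n) ℂ) :
    ‖M‖ = Real.sqrt (∑ i, ∑ j, ‖M i j‖ ^ 2) := by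
  rw [Matrix.frobenius_norm_def, Real.sqrt_eq_rpow]
  norm_num

lemma sq_fnorm (M : Matrix (Fin m) (Fin n) ℂ) :
    ‖M‖ ^ 2 = (Matrix.trace (Mᴴ * M)).re := by
  rw [fnorm_eq, Real.sq_sqrt (by positivity)]
  rw [Matrix.trace]
  simp only [Matrix.diag_apply, Matrix.mul_apply, Matrix.conjTranspose_apply, Complex.re_sum]
  rw [Finset.sum_comm]
  congr 1; ext i; congr 1; ext j
  rw [RCLike.star_def, mul_comm, Complex.mul_conj']
  rw [← Complex.ofReal_pow, Complex.ofReal_re]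

lemma fnorm_eq_of_sq {M : Matrix (Fin m) (Fin n) ℂ} {N : Matrix (Fin m) (Fin k) ℂ}
    (h : ‖M‖ ^ 2 = ‖N‖ ^ 2) : ‖M‖ = ‖N‖ := by
  rw [← Real.sqrt_sq (norm_nonneg M), ← Real.sqrt_sq (norm_nonneg N), h]

lemma trace_conj {Λ : Matrix (Fin n) (Fin r) ℂ} (hΛ : Λᴴ * Λ = 1)
    (M : Matrix (Fin r) (Fin r) ℂ) : Matrix.trace (Λ * M * Λᴴ) = Matrix.trace M := by
  rw [Matrix.trace_mul_cycle, hΛ, Matrix.one_mul]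

lemma fnorm_mul_orthH (Λ : Matrix (Fin n) (Fin r) ℂ) (hΛ : Λᴴ * Λ = 1)
    (M : Matrix (Fin m) (Fin r) ℂ) : ‖M * Λᴴ‖ = ‖M‖ := by
  apply fnorm_eq_of_sq
  rw [sq_fnorm, sq_fnorm, Matrix.conjTranspose_mul, Matrix.conjTranspose_conjTranspose,
    show Λ * Mᴴ * (M * Λᴴ) = Λ * (Mᴴ * M) * Λᴴ by simp [Matrix.mul_assoc],
    trace_conj hΛ]

lemma fnorm_mul_orth_le (Λ : Matrix (Fin n) (Fin r) ℂ) (hΛ : Λᴴ * Λ = 1)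
    (A : Matrix (Fin m) (Fin n) ℂ) : ‖A * Λ‖ ≤ ‖A‖ := by
  have hsq : ‖A * Λ‖ ^ 2 = ‖A * Λ * Λᴴ‖ ^ 2 := by
    rw [sq_fnorm, sq_fnorm,
      show (A * Λ * Λᴴ)ᴴ * (A * Λ * Λᴴ) = Λ * ((A * Λ)ᴴ * (A * Λ)) * Λᴴ by
        simp [Matrix.conjTranspose_mul, Matrix.mul_assoc],
      trace_conj hΛ]
  have hpyth : ‖A‖ ^ 2 = ‖A * Λ * Λᴴ‖ ^ 2 + ‖A - A * Λ * Λᴴ‖ ^ 2 := by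
    rw [sq_fnorm, sq_fnorm, sq_fnorm]
    have e1 : (A * Λ * Λᴴ)ᴴ * (A * Λ * Λᴴ) = Λ * Λᴴ * (Aᴴ * A) * (Λ * Λᴴ) := by
      simp [Matrix.conjTranspose_mul, Matrix.mul_assoc]
    have e2 : (A - A * Λ * Λᴴ)ᴴ * (A - A * Λ * Λᴴ) =
        Aᴴ * A - Aᴴ * A * (Λ * Λᴴ) - Λ * Λᴴ * (Aᴴ * A)
          + Λ * Λᴴ * (Aᴴ * A) * (Λ * Λᴴ) := by
      simp only [Matrix.conjTranspose_sub, Matrix.conjTranspose_mul,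
        Matrix.conjTranspose_conjTranspose, Matrix.sub_mul, Matrix.mul_sub, Matrix.mul_assoc]
      abel
    rw [e1, e2]
    have hP : Λ * Λᴴ * (Λ * Λᴴ) = Λ * Λᴴ := by
      rw [Matrix.mul_assoc, ← Matrix.mul_assoc Λᴴ, hΛ, Matrix.one_mul]
    have t1 : Matrix.trace (Λ * Λᴴ * (Aᴴ * A) * (Λ * Λᴴ)) =
        Matrix.trace (Aᴴ * A * (Λ * Λᴴ)) := by
      rw [Matrix.trace_mul_cycle (Λ * Λᴴ), hP, Matrix.trace_mul_comm]
    have t2 : Matrix.trace (Λ * Λᴴ * (Aᴴ * A)) = Matrix.trace (Aᴴ * A * (Λ * Λᴴ)) :=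
      Matrix.trace_mul_comm _ _
    simp only [Matrix.trace_add, Matrix.trace_sub, t1, t2, Complex.add_re, Complex.sub_re]
    ring
  have h2 : ‖A * Λ‖ ^ 2 ≤ ‖A‖ ^ 2 := by
    rw [hsq, hpyth]; nlinarith [sq_nonneg ‖A - A * Λ * Λᴴ‖]
  have := Real.sqrt_le_sqrt h2
  rwa [Real.sqrt_sq (norm_nonneg _), Real.sqrt_sq (norm_nonneg _)] at this

end Aux

/-- stability of the projection loss. If `Λ ∈ ℂ^{n×r}` has orthonormal
columns and `V̂ ∈ ℂ^{n×r}` satisfies `‖V̂ − Λ‖_F ≤ ε` for some `ε ∈ [0,1]`, then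
`‖A − AΛΛ†‖_F ≤ ‖A − AV̂V̂†‖_F + 3ε‖A‖_F`. -/
theorem stmt14 (m n r : ℕ) (hr : 1 ≤ r) (A : Matrix (Fin m) (Fin n) ℂ)
    (Λ Vh : Matrix (Fin n) (Fin r) ℂ) (hΛ : Λᴴ * Λ = 1)
    (ε : ℝ) (hε : ε ∈ Set.Icc (0:ℝ) 1)
    (h : Real.sqrt (∑ i, ∑ j, ‖(Vh - Λ) i j‖ ^ 2) ≤ ε) :
    Real.sqrt (∑ i, ∑ j, ‖(A - A * Λ * Λᴴ) i j‖ ^ 2) ≤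
      Real.sqrt (∑ i, ∑ j, ‖(A - A * Vh * Vhᴴ) i j‖ ^ 2) +
        3 * ε * Real.sqrt (∑ i, ∑ j, ‖A i j‖ ^ 2) := by
  rw [← fnorm_eq] at h
  rw [← fnorm_eq, ← fnorm_eq, ← fnorm_eq]
  set E : Matrix (Fin n) (Fin r) ℂ := Vh - Λ with hEdef
  have key : A - A * Λ * Λᴴ = (A - A * Vh * Vhᴴ) +
      (A * E * Λᴴ + A * E * Eᴴ + A * Λ * Eᴴ) := by
    rw [hEdef]
    simp only [Matrix.conjTranspose_sub, Matrix.mul_sub, Matrix.sub_mul]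
    abel
  have hEs : ‖Eᴴ‖ = ‖E‖ := Matrix.frobenius_norm_conjTranspose E
  have h1 : ‖A * E * Λᴴ‖ = ‖A * E‖ := fnorm_mul_orthH Λ hΛ (A * E)
  have h2 : ‖A * E‖ ≤ ‖A‖ * ‖E‖ := Matrix.frobenius_norm_mul A E
  have h3 : ‖A * E * Eᴴ‖ ≤ ‖A * E‖ * ‖E‖ := hEs ▸ Matrix.frobenius_norm_mul (A * E) Eᴴ
  have h4 : ‖A * Λ * Eᴴ‖ ≤ ‖A * Λ‖ * ‖E‖ := hEs ▸ Matrix.frobenius_norm_mul (A * Λ) Eᴴ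
  have h5 : ‖A * Λ‖ ≤ ‖A‖ := fnorm_mul_orth_le Λ hΛ A
  calc ‖A - A * Λ * Λᴴ‖
      ≤ ‖A - A * Vh * Vhᴴ‖ + (‖A * E * Λᴴ‖ + ‖A * E * Eᴴ‖ + ‖A * Λ * Eᴴ‖) := by
        rw [key]
        exact (norm_add_le _ _).trans (add_le_add le_rfl norm_add₃_le)
    _ ≤ ‖A - A * Vh * Vhᴴ‖ + 3 * ε * ‖A‖ := by
        have hAE : ‖A * E‖ ≤ ‖A‖ * ε := h2.trans (by gcongr)
        nlinarith [norm_nonneg (A * E), norm_nonneg E, norm_nonneg A, hε.1, hε.2, h]
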